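/- Let X be a compact Hausdorff space, μ₁ and μ₂ idempotent probability measures on X, and α, β ∈ ℝ with max(α, β) = 0. Then supp(α⊙μ₁ ⊕ β⊙μ₂) = supp μ₁ ∪ supp μ₂. -/

import Mathlib

/-- `μ : C(X, ℝ) → ℝ` is an idempotent probability measure. -/
def IsIPM {X : Type*} [TopologicalSpace X] (μ : C(X, ℝ) → ℝ) : Prop :=
  (∀ c : ℝ, μ (ContinuousMap.const X c) = c) ∧
  (∀ (φ : C(X, ℝ)) (c : ℝ), μ (φ + ContinuousMap.const X c) = μ φ + c) ∧
  (∀ φ ψ : C(X, ℝ), μ (φ ⊔ ψ) = max (μ φ) (μ ψ))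

/-- `μ` is supported on the set `F`. -/
def IPMSupportedOn {X : Type*} [TopologicalSpace X] (μ : C(X, ℝ) → ℝ) (F : Set X) : Prop :=
  ∀ φ ψ : C(X, ℝ), (∀ x ∈ F, φ x = ψ x) → μ φ = μ ψ

/-- The support of `μ`. -/
def IPMsupport {X : Type*} [TopologicalSpace X] (μ : C(X, ℝ) → ℝ) : Set X :=
  ⋂₀ {F : Set X | IsClosed F ∧ IPMSupportedOn μ F}

/-- The pushforward `I(f)`. -/
def IPMmap {X Y : Type*} [TopologicalSpace X] [TopologicalSpace Y]
    (f : C(X, Y)) (μ : C(X, ℝ) → ℝ) : C(Y, ℝ) → ℝ :=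
  fun ψ => μ (ψ.comp f)

/-- The max-plus combination `α⊙μ₁ ⊕ β⊙μ₂`. -/
def mpComb {X : Type*} [TopologicalSpace X] (α β : ℝ) (μ₁ μ₂ : C(X, ℝ) → ℝ) :
    C(X, ℝ) → ℝ :=
  fun φ => max (α + μ₁ φ) (β + μ₂ φ)

/-- The Dirac measure `δ_x`. -/
def IPMdirac {X : Type*} [TopologicalSpace X] (x : X) : C(X, ℝ) → ℝ := fun φ => φ x

/-- `μ` is a finitely supported idempotent probability measure of the form
`λ₁⊙δ_{x₁} ⊕ … ⊕ λ_s⊙δ_{x_s}` with all the points `xᵢ` in `Y`. -/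
def IsFinSuppIPM {X : Type*} [TopologicalSpace X] (Y : Set X) (μ : C(X, ℝ) → ℝ) : Prop :=
  ∃ (n : ℕ) (x : Fin (n + 1) → X) (lam : Fin (n + 1) → ℝ),
    (∀ i, x i ∈ Y) ∧
    Finset.univ.sup' Finset.univ_nonempty lam = 0 ∧
    μ = fun φ => Finset.univ.sup' Finset.univ_nonempty fun i => lam i + φ (x i)

/-- `I_β(X)`: idempotent probability measures on `βX` with support in (the image of) `X`. -/
def IBeta (X : Type*) [TopologicalSpace X] : Set (C(StoneCech X, ℝ) → ℝ) :=
  {μ | IsIPM μ ∧ IPMsupport μ ⊆ Set.range (stoneCechUnit : X → StoneCech X)}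

section Aux
variable {X : Type*} [TopologicalSpace X]

lemma IsIPM.mono {μ : C(X, ℝ) → ℝ} (h : IsIPM μ) {φ ψ : C(X, ℝ)} (hle : φ ≤ ψ) :
    μ φ ≤ μ ψ := by
  have h3 := h.2.2 φ ψ
  rw [sup_eq_right.mpr hle] at h3
  rw [h3]; exact le_max_left _ _

lemma ipm_cap {μ : C(X, ℝ) → ℝ} (h : IsIPM μ) {F : Set X} (hF : IPMSupportedOn μ F)
    {φ ψ : C(X, ℝ)} {ε : ℝ} (hle : ∀ x ∈ F, φ x ≤ ψ x + ε) : μ φ ≤ μ ψ + ε := by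
  have h1 : μ (φ ⊓ (ψ + ContinuousMap.const X ε)) = μ φ := by
    apply hF
    intro x hx
    simp only [ContinuousMap.inf_apply, ContinuousMap.add_apply, ContinuousMap.const_apply]
    exact min_eq_left (hle x hx)
  have h2 : μ (φ ⊓ (ψ + ContinuousMap.const X ε)) ≤ μ ψ + ε := by
    rw [← h.2.1 ψ ε]; exact h.mono inf_le_right
  linarith

lemma ipm_sup' {ι : Type*} {μ : C(X, ℝ) → ℝ} (h : IsIPM μ) {t : Finset ι} (ht : t.Nonempty)
    (g : ι → C(X, ℝ)) : μ (t.sup' ht g) = t.sup' ht fun i => μ (g i) := by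
  induction ht using Finset.Nonempty.cons_induction with
  | singleton i => simp
  | cons i s hi hs ih =>
    rw [Finset.sup'_cons (H := hs), Finset.sup'_cons (H := hs), h.2.2, ih]

lemma ipm_rep [CompactSpace X] [Nonempty X] {μ : C(X, ℝ) → ℝ} (h : IsIPM μ)
    (f : C(X, ℝ)) {ε : ℝ} (hε : 0 < ε) :
    ∃ x : X, ∀ φ : C(X, ℝ), μ f + φ x ≤ μ φ + ε + f x := by
  by_contra hc
  push_neg at hc
  set U : C(X, ℝ) → Set X := fun φ => {y | μ φ + ε + f y < μ f + φ y} with hU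
  have hopen : ∀ φ, IsOpen (U φ) := fun φ =>
    isOpen_lt (by fun_prop) (by fun_prop)
  have hcover : (Set.univ : Set X) ⊆ ⋃ φ, U φ := fun x _ => by
    obtain ⟨φ, hφ⟩ := hc x
    exact Set.mem_iUnion.mpr ⟨φ, hφ⟩
  obtain ⟨t, ht⟩ := isCompact_univ.elim_finite_subcover U hopen hcover
  have htne : t.Nonempty := by
    obtain ⟨x⟩ := ‹Nonempty X›
    obtain ⟨φ, hmem, _⟩ := Set.mem_iUnion₂.mp (ht (Set.mem_univ x))
    exact ⟨φ, hmem⟩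
  set ψ := t.sup' htne fun φ => φ + ContinuousMap.const X (μ f - μ φ - ε) with hψ
  have hμψ : μ ψ = μ f - ε := by
    rw [hψ, ipm_sup' h]
    have hcg : ∀ φ ∈ t, μ (φ + ContinuousMap.const X (μ f - μ φ - ε)) = μ f - ε := by
      intro φ _
      rw [h.2.1]; ring
    rw [Finset.sup'_congr htne rfl hcg, Finset.sup'_const]
  have hfle : f ≤ ψ := by
    rw [ContinuousMap.le_def]
    intro y
    obtain ⟨φ, hmem, hy⟩ := Set.mem_iUnion₂.mp (ht (Set.mem_univ y))
    have h1 : f y ≤ (φ + ContinuousMap.const X (μ f - μ φ - ε)) y := by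
      simp only [ContinuousMap.add_apply, ContinuousMap.const_apply]
      have h2 : μ φ + ε + f y < μ f + φ y := hy
      linarith
    have h3 : (φ + ContinuousMap.const X (μ f - μ φ - ε)) y ≤ ψ y := by
      rw [hψ, ContinuousMap.sup'_apply]
      exact Finset.le_sup' (f := fun φ => (φ + ContinuousMap.const X (μ f - μ φ - ε)) y) hmem
    linarith
  have := h.mono hfle
  rw [hμψ] at this
  linarith

end Aux

section Key
variable {X : Type*} [TopologicalSpace X]

lemma mpComb_supported_left [CompactSpace X] {μ₁ μ₂ : C(X, ℝ) → ℝ} (h1 : IsIPM μ₁)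
    (α β : ℝ) {F : Set X} (hF : IPMSupportedOn (mpComb α β μ₁ μ₂) F) :
    IPMSupportedOn μ₁ F := by
  cases isEmpty_or_nonempty X with
  | inl hX =>
    intro φ ψ _
    congr 1
    ext x
    exact hX.elim x
  | inr hX =>
    have key : ∀ φ ψ : C(X, ℝ), (∀ x ∈ F, φ x = ψ x) → ψ ≤ φ → μ₁ φ ≤ μ₁ ψ := by
      intro φ ψ heq _
      by_contra hlt
      push_neg at hlt
      set δ := μ₁ φ - μ₁ ψ with hδ
      have hδpos : 0 < δ := by simp only [hδ]; linarith
      obtain ⟨x, hx⟩ := ipm_rep h1 φ (half_pos hδpos)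
      have hgap : δ / 2 ≤ φ x - ψ x := by
        have := hx ψ
        simp only [hδ] at *
        linarith
      have hbound : ∀ n : ℕ,
          μ₁ ψ + ((n : ℝ) + 1) * (δ / 2) ≤ μ₁ (ψ + ((n : ℝ) + 1) • (φ - ψ)) := by
        intro n
        have h2 := hx (ψ + ((n : ℝ) + 1) • (φ - ψ))
        have happ : (ψ + ((n : ℝ) + 1) • (φ - ψ)) x = ψ x + ((n : ℝ) + 1) * (φ x - ψ x) := by
          simp
        rw [happ] at h2
        have hn : (0 : ℝ) ≤ (n : ℝ) := Nat.cast_nonneg n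
        have hmul : (n : ℝ) * (δ / 2) ≤ (n : ℝ) * (φ x - ψ x) :=
          mul_le_mul_of_nonneg_left hgap hn
        have hδeq : μ₁ φ = μ₁ ψ + δ := by simp [hδ]
        nlinarith [h2, hmul]
      have hνeq : ∀ n : ℕ,
          mpComb α β μ₁ μ₂ (ψ + ((n : ℝ) + 1) • (φ - ψ)) = mpComb α β μ₁ μ₂ ψ := by
        intro n
        apply hF
        intro y hy
        simp [heq y hy]
      obtain ⟨n, hn⟩ := exists_nat_gt ((mpComb α β μ₁ μ₂ ψ - α - μ₁ ψ) / (δ / 2))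
      have h3 : α + μ₁ (ψ + ((n : ℝ) + 1) • (φ - ψ)) ≤ mpComb α β μ₁ μ₂ ψ := by
        rw [← hνeq n]
        exact le_max_left _ _
      have h4 := hbound n
      have h5 : mpComb α β μ₁ μ₂ ψ - α - μ₁ ψ < (n : ℝ) * (δ / 2) := by
        rw [div_lt_iff₀ (half_pos hδpos)] at hn
        linarith
      nlinarith
    intro φ ψ heq
    have e1 : μ₁ (φ ⊔ ψ) ≤ μ₁ ψ :=
      key (φ ⊔ ψ) ψ (fun x hx => by simp [heq x hx]) le_sup_right
    have e2 : μ₁ (φ ⊔ ψ) ≤ μ₁ φ :=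
      key (φ ⊔ ψ) φ (fun x hx => by simp [heq x hx]) le_sup_left
    have e3 := h1.mono (le_sup_left : φ ≤ φ ⊔ ψ)
    have e4 := h1.mono (le_sup_right : ψ ≤ φ ⊔ ψ)
    linarith

lemma mpComb_comm (α β : ℝ) (μ₁ μ₂ : C(X, ℝ) → ℝ) :
    mpComb α β μ₁ μ₂ = mpComb β α μ₂ μ₁ := by
  funext φ
  exact max_comm _ _

end Key

section Supp
variable {X : Type*} [TopologicalSpace X]

lemma inter_supported [CompactSpace X] [T2Space X] {μ : C(X, ℝ) → ℝ} (h : IsIPM μ)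
    {F G : Set X} (hFc : IsClosed F) (hGc : IsClosed G)
    (hF : IPMSupportedOn μ F) (hG : IPMSupportedOn μ G) : IPMSupportedOn μ (F ∩ G) := by
  intro φ ψ heq
  have key : ∀ ε : ℝ, 0 < ε → μ φ ≤ μ ψ + 2 * ε ∧ μ ψ ≤ μ φ + 2 * ε := by
    intro ε hε
    set K : Set X := {x | ε ≤ |φ x - ψ x|} with hK
    have hKc : IsClosed K := isClosed_le continuous_const (by fun_prop)
    have hdisj : Disjoint (F ∩ K) (G ∩ K) := by
      rw [Set.disjoint_left]
      rintro x ⟨hxF, hxK⟩ ⟨hxG, -⟩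
      have : φ x = ψ x := heq x ⟨hxF, hxG⟩
      have : ε ≤ |φ x - ψ x| := hxK
      rw [‹φ x = ψ x›] at this
      simp at this
      linarith
    obtain ⟨u, hu0, hu1, hu01⟩ :=
      exists_continuous_zero_one_of_isClosed (hFc.inter hKc) (hGc.inter hKc) hdisj
    set χ : C(X, ℝ) := (1 - u) * φ + u * ψ with hχ
    have hχF : ∀ x ∈ F, |χ x - φ x| ≤ ε := by
      intro x hxF
      by_cases hxK : x ∈ K
      · have : u x = 0 := hu0 ⟨hxF, hxK⟩
        simp [hχ, this, hε.le]
      · have habs : |φ x - ψ x| < ε := lt_of_not_ge hxK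
        have h01 := hu01 x
        have hc : χ x - φ x = u x * (ψ x - φ x) := by simp [hχ]; ring
        rw [hc, abs_mul]
        calc |u x| * |ψ x - φ x| ≤ 1 * ε := by
              apply mul_le_mul _ _ (abs_nonneg _) zero_le_one
              · rw [abs_le]; constructor <;> [linarith [h01.1]; skip]; exact h01.2
              · rw [abs_sub_comm]; exact habs.le
          _ = ε := one_mul ε
    have hχG : ∀ x ∈ G, |χ x - ψ x| ≤ ε := by
      intro x hxG
      by_cases hxK : x ∈ K
      · have : u x = 1 := hu1 ⟨hxG, hxK⟩
        simp [hχ, this, hε.le]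
      · have habs : |φ x - ψ x| < ε := lt_of_not_ge hxK
        have h01 := hu01 x
        have hc : χ x - ψ x = (1 - u x) * (φ x - ψ x) := by simp [hχ]; ring
        rw [hc, abs_mul]
        calc |1 - u x| * |φ x - ψ x| ≤ 1 * ε := by
              apply mul_le_mul _ habs.le (abs_nonneg _) zero_le_one
              rw [abs_le]; constructor <;> [linarith [h01.2]; linarith [h01.1]]
          _ = ε := one_mul ε
    have a1 : μ φ ≤ μ χ + ε := ipm_cap h hF fun x hx => by
      have := hχF x hx; rw [abs_le] at this; linarith [this.1]
    have a2 : μ χ ≤ μ φ + ε := ipm_cap h hF fun x hx => by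
      have := hχF x hx; rw [abs_le] at this; linarith [this.2]
    have a3 : μ χ ≤ μ ψ + ε := ipm_cap h hG fun x hx => by
      have := hχG x hx; rw [abs_le] at this; linarith [this.2]
    have a4 : μ ψ ≤ μ χ + ε := ipm_cap h hG fun x hx => by
      have := hχG x hx; rw [abs_le] at this; linarith [this.1]
    exact ⟨by linarith, by linarith⟩
  have l1 : μ φ ≤ μ ψ := by
    apply le_of_forall_pos_le_add
    intro ε hε
    have := (key (ε / 2) (half_pos hε)).1
    linarith
  have l2 : μ ψ ≤ μ φ := by
    apply le_of_forall_pos_le_add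
    intro ε hε
    have := (key (ε / 2) (half_pos hε)).2
    linarith
  linarith

lemma supported_on_support [CompactSpace X] [T2Space X] {μ : C(X, ℝ) → ℝ} (h : IsIPM μ) :
    IPMSupportedOn μ (IPMsupport μ) := by
  intro φ ψ heq
  have key : ∀ ε : ℝ, 0 < ε → μ φ ≤ μ ψ + ε ∧ μ ψ ≤ μ φ + ε := by
    intro ε hε
    set K : Set X := {x | ε ≤ |φ x - ψ x|} with hK
    have hKc : IsClosed K := isClosed_le continuous_const (by fun_prop)
    set ι := {F : Set X // IsClosed F ∧ IPMSupportedOn μ F} with hι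
    have hempty : K ∩ ⋂ i : ι, (i : Set X) = ∅ := by
      rw [Set.eq_empty_iff_forall_notMem]
      rintro x ⟨hxK, hxI⟩
      have hxsupp : x ∈ IPMsupport μ := by
        rw [IPMsupport, Set.sInter_eq_iInter]
        exact hxI
      have h1 : φ x = ψ x := heq x hxsupp
      have h2 : ε ≤ |φ x - ψ x| := hxK
      rw [h1] at h2
      simp at h2
      linarith
    obtain ⟨u, hu⟩ := (hKc.isCompact).elim_finite_subfamily_closed
      (fun i : ι => (i : Set X)) (fun i => i.2.1) hempty
    have hsupp : ∀ v : Finset ι,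
        IsClosed (⋂ i ∈ v, (i : Set X)) ∧ IPMSupportedOn μ (⋂ i ∈ v, (i : Set X)) := by
      classical
      intro v
      induction v using Finset.induction_on with
      | empty =>
        simp only [Finset.notMem_empty, Set.iInter_of_empty, Set.iInter_univ]
        refine ⟨isClosed_univ, ?_⟩
        intro φ' ψ' heq'
        congr 1
        ext x
        exact heq' x (Set.mem_univ x)
      | insert a s ha ih =>
        rw [Finset.set_biInter_insert]
        exact ⟨a.2.1.inter ih.1, inter_supported h a.2.1 ih.1 a.2.2 ih.2⟩
    have hFK : ∀ x ∈ ⋂ i ∈ u, (i : Set X), |φ x - ψ x| < ε := by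
      intro x hx
      by_contra hge
      push_neg at hge
      have : x ∈ K ∩ ⋂ i ∈ u, (i : Set X) := ⟨hge, hx⟩
      rw [hu] at this
      exact this
    constructor
    · apply ipm_cap h (hsupp u).2
      intro x hx
      have := hFK x hx
      rw [abs_lt] at this
      linarith [this.1]
    · apply ipm_cap h (hsupp u).2
      intro x hx
      have := hFK x hx
      rw [abs_lt] at this
      linarith [this.2]
  have l1 : μ φ ≤ μ ψ := le_of_forall_pos_le_add fun ε hε => (key ε hε).1
  have l2 : μ ψ ≤ μ φ := le_of_forall_pos_le_add fun ε hε => (key ε hε).2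
  linarith

end Supp


/-- `supp (α⊙μ₁ ⊕ β⊙μ₂) = supp μ₁ ∪ supp μ₂`. -/
theorem ipm_support_mpComb {X : Type*} [TopologicalSpace X] [CompactSpace X] [T2Space X]
    (μ₁ μ₂ : C(X, ℝ) → ℝ) (hμ₁ : IsIPM μ₁) (hμ₂ : IsIPM μ₂)
    (α β : ℝ) (hαβ : max α β = 0) :
    IPMsupport (mpComb α β μ₁ μ₂) = IPMsupport μ₁ ∪ IPMsupport μ₂ := by
  apply Set.Subset.antisymm
  · -- supp ν ⊆ supp μ₁ ∪ supp μ₂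
    have hclosed : IsClosed (IPMsupport μ₁ ∪ IPMsupport μ₂) := by
      apply IsClosed.union <;>
        exact isClosed_sInter fun F hF => hF.1
    have hsup : IPMSupportedOn (mpComb α β μ₁ μ₂) (IPMsupport μ₁ ∪ IPMsupport μ₂) := by
      intro φ ψ heq
      have e1 : μ₁ φ = μ₁ ψ :=
        supported_on_support hμ₁ φ ψ fun x hx => heq x (Or.inl hx)
      have e2 : μ₂ φ = μ₂ ψ :=
        supported_on_support hμ₂ φ ψ fun x hx => heq x (Or.inr hx)
      simp [mpComb, e1, e2]
    exact Set.sInter_subset_of_mem ⟨hclosed, hsup⟩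
  · apply Set.union_subset
    · intro x hx
      rw [IPMsupport, Set.mem_sInter]
      rintro F ⟨hFc, hFs⟩
      exact hx F ⟨hFc, mpComb_supported_left hμ₁ α β hFs⟩
    · intro x hx
      rw [IPMsupport, Set.mem_sInter]
      rintro F ⟨hFc, hFs⟩
      rw [mpComb_comm] at hFs
      exact hx F ⟨hFc, mpComb_supported_left hμ₂ β α hFs⟩
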